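/- Let Γ = (V, E) be a finite simple graph and G_Γ the associated right-angled Artin group. Let ρ : G_Γ → ℂ* be a nontrivial character, and let supp(ρ) = {v ∈ V : ρ(v) ≠ 1} (evaluating ρ on the images of the generators). Then H¹(G_Γ, ℂ_ρ) ≠ 0 if and only if there exists a subset W ⊆ V with supp(ρ) ⊆ W such that the induced subgraph Γ(W) is disconnected. Equivalently, the first characteristic variety V₁(G_Γ), away from the trivial character, is the union of the subtori T_W = {ρ : ρ(v) = 1 for all v ∉ W} over all W ⊆ V with Γ(W) disconnected. -/

import Mathlib

/-- The rank-one representation `ℂ_ρ` of `G` determined by a character `ρ : G → ℂ*`: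
`g` acts on `ℂ` as multiplication by `ρ(g)`. -/
def charRep {G : Type} [Group G] (ρ : G →* ℂˣ) : Representation ℂ G ℂ :=
  (Algebra.lmul ℂ ℂ).toRingHom.toMonoidHom.comp ((Units.coeHom ℂ).comp ρ)

/-- The commutator relators of the right-angled Artin group of a graph `Γ`. -/
def raagRels {V : Type} (Γ : SimpleGraph V) : Set (FreeGroup V) :=
  {r | ∃ v w : V, Γ.Adj v w ∧
    r = FreeGroup.of v * FreeGroup.of w * (FreeGroup.of v)⁻¹ * (FreeGroup.of w)⁻¹}

/-- The right-angled Artin group of a finite simple graph `Γ`, presented with generating set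
the vertices and relators the commutators of adjacent vertices. -/
abbrev RAAG {V : Type} (Γ : SimpleGraph V) : Type := PresentedGroup (raagRels Γ)

/-- `W` induces a disconnected subgraph of `Γ`: it splits into two nonempty parts with no
edge of `Γ` between them. -/
def IsDisconnectedIn {V : Type*} (Γ : SimpleGraph V) (W : Set V) : Prop :=
  ∃ W₁ W₂ : Set V, W₁.Nonempty ∧ W₂.Nonempty ∧ Disjoint W₁ W₂ ∧ W₁ ∪ W₂ = W ∧
    ∀ v ∈ W₁, ∀ w ∈ W₂, ¬ Γ.Adj v w

section Aux

open groupCohomology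

/-- Nontriviality of first group cohomology in terms of cocycles and coboundaries. -/
lemma nontrivial_H1_iff {k G : Type} [CommRing k] [Group G] (A : Rep k G) :
    Nontrivial (groupCohomology A 1) ↔ ∃ f : cocycles₁ A, ⇑f ∉ coboundaries₁ A := by
  constructor
  · intro h
    by_contra hc
    push_neg at hc
    have hz : ∀ y : groupCohomology A 1, y = 0 := fun y =>
      H1_induction_on y fun x => (H1π_eq_zero_iff x).2 (hc x)
    rcases h with ⟨a, b, hab⟩
    exact hab ((hz a).trans (hz b).symm)
  · rintro ⟨f, hf⟩
    have hne : H1π A f ≠ 0 := fun h0 => hf ((H1π_eq_zero_iff f).1 h0)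
    exact nontrivial_of_ne _ _ hne

lemma mem_coboundaries₁_iff' {k G : Type} [CommRing k] [Group G] (A : Rep k G) (f : G → A) :
    f ∈ coboundaries₁ A ↔ ∃ x : A, ∀ g : G, A.ρ g x - x = f g := by
  constructor
  · rintro ⟨x, rfl⟩
    exact ⟨x, fun g => by rw [d₀₁_hom_apply]⟩
  · rintro ⟨x, hx⟩
    exact ⟨x, funext fun g => by rw [d₀₁_hom_apply, hx g]⟩

/-- The scaling action of `ℂˣ` on `Multiplicative ℂ`. -/
noncomputable def scaleHom : ℂˣ →* MulAut (Multiplicative ℂ) where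
  toFun u := AddEquiv.toMultiplicative (DistribMulAction.toAddAut ℂˣ ℂ u)
  map_one' := by ext x; simp
  map_mul' u v := by ext x; simp [mul_smul]

lemma raag_comm {V : Type} {Γ : SimpleGraph V} {v w : V} (h : Γ.Adj v w) :
    (PresentedGroup.of v : RAAG Γ) * PresentedGroup.of w
      = PresentedGroup.of w * PresentedGroup.of v := by
  have hr : (FreeGroup.of v * FreeGroup.of w * (FreeGroup.of v)⁻¹ * (FreeGroup.of w)⁻¹)
      ∈ Subgroup.normalClosure (raagRels Γ) :=
    Subgroup.subset_normalClosure ⟨v, w, h, rfl⟩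
  have h1 : (PresentedGroup.mk (raagRels Γ))
      (FreeGroup.of v * FreeGroup.of w * (FreeGroup.of v)⁻¹ * (FreeGroup.of w)⁻¹) = 1 :=
    (QuotientGroup.eq_one_iff _).2 hr
  have h2 : (PresentedGroup.of v : RAAG Γ) * PresentedGroup.of w *
      (PresentedGroup.of v)⁻¹ * (PresentedGroup.of w)⁻¹ = 1 := by
    simpa [PresentedGroup.of, map_mul, map_inv] using h1
  have h3 := congrArg (· * (PresentedGroup.of w * PresentedGroup.of v)) h2
  simp only [one_mul] at h3
  rw [← h3]
  group

/-- Build a 1-cocycle from generator data satisfying the edge conditions. -/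
lemma exists_cocycle {V : Type} {Γ : SimpleGraph V} (ρ : RAAG Γ →* ℂˣ) (x : V → ℂ)
    (hx : ∀ v w : V, Γ.Adj v w →
      x v + (ρ (PresentedGroup.of v) : ℂ) * x w = x w + (ρ (PresentedGroup.of w) : ℂ) * x v) :
    ∃ f : RAAG Γ → ℂ, f ∈ groupCohomology.cocycles₁ (Rep.of (charRep ρ)) ∧
      ∀ v : V, f (PresentedGroup.of v) = x v := by
  classical
  set fgen : V → (Multiplicative ℂ ⋊[scaleHom] ℂˣ) :=
    fun v => ⟨Multiplicative.ofAdd (x v), ρ (PresentedGroup.of v)⟩ with hfgen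
  have hrel : ∀ r ∈ raagRels Γ, FreeGroup.lift fgen r = 1 := by
    rintro r ⟨v, w, hadj, rfl⟩
    have hc : fgen v * fgen w = fgen w * fgen v := by
      ext
      · show (Multiplicative.ofAdd (x v) * scaleHom (ρ (PresentedGroup.of v))
          (Multiplicative.ofAdd (x w))) = _
        simp only [hfgen]
        apply Multiplicative.toAdd.injective
        exact (show x v + (ρ (PresentedGroup.of v) : ℂ) * x w
          = x w + (ρ (PresentedGroup.of w) : ℂ) * x v from hx v w hadj)
      · exact mul_comm _ _
    simp only [map_mul, map_inv, FreeGroup.lift_apply_of]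
    rw [hc]
    group
  set Ψ : RAAG Γ →* (Multiplicative ℂ ⋊[scaleHom] ℂˣ) := PresentedGroup.toGroup hrel with hΨ
  have hright : ∀ g : RAAG Γ, (Ψ g).right = ρ g := by
    have : SemidirectProduct.rightHom.comp Ψ = ρ := by
      apply PresentedGroup.ext
      intro v
      simp [hΨ, PresentedGroup.toGroup.of, hfgen, SemidirectProduct.rightHom]
    exact fun g => DFunLike.congr_fun this g
  refine ⟨fun g => Multiplicative.toAdd (Ψ g).left, ?_, ?_⟩
  · rw [groupCohomology.mem_cocycles₁_iff]
    intro g h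
    show Multiplicative.toAdd (Ψ (g*h)).left = (ρ g : ℂ) * Multiplicative.toAdd (Ψ h).left
      + Multiplicative.toAdd (Ψ g).left
    rw [map_mul, SemidirectProduct.mul_left, toAdd_mul, hright]
    show Multiplicative.toAdd (Ψ g).left + (ρ g : ℂ) • Multiplicative.toAdd (Ψ h).left = _
    rw [smul_eq_mul]; ring
  · intro v
    show Multiplicative.toAdd (Ψ (PresentedGroup.of v)).left = x v
    rw [hΨ, PresentedGroup.toGroup.of]
    rfl

/-- A 1-cocycle vanishing on the generators vanishes. -/
lemma cocycle_vanish {V : Type} {Γ : SimpleGraph V} (ρ : RAAG Γ →* ℂˣ)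
    (f : groupCohomology.cocycles₁ (Rep.of (charRep ρ)))
    (h0 : ∀ v : V, f (PresentedGroup.of v) = 0) (g : RAAG Γ) : f g = 0 := by
  let K : Subgroup (RAAG Γ) :=
    { carrier := {g | f g = 0}
      one_mem' := groupCohomology.cocycles₁_map_one f
      mul_mem' := fun {a b} ha hb => by
        have h := (groupCohomology.mem_cocycles₁_iff
          ((f : RAAG Γ → ℂ))).1 f.2 a b
        simp only [Set.mem_setOf_eq] at *
        rw [h, ha, hb]
        simp
      inv_mem' := fun {a} ha => by
        have h := groupCohomology.cocycles₁_map_inv f a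
        simp only [Set.mem_setOf_eq] at *
        rw [ha, neg_zero] at h
        obtain ⟨y, hy⟩ : ∃ y : ℂ, f a⁻¹ = y := ⟨f a⁻¹, rfl⟩
        rw [hy] at h ⊢
        have h4 : (ρ a : ℂ) * y = 0 := h
        exact (mul_eq_zero.1 h4).resolve_left (Units.ne_zero _) }
  exact PresentedGroup.generated_by _ K (fun v => h0 v) g

set_option maxHeartbeats 800000 in
/-- The edge condition satisfied by a 1-cocycle, evaluated on adjacent generators. -/
lemma cocycle_edge {V : Type} {Γ : SimpleGraph V} (ρ : RAAG Γ →* ℂˣ)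
    {f : RAAG Γ → ℂ} (hf : f ∈ groupCohomology.cocycles₁ (Rep.of (charRep ρ)))
    {v w : V} (h : Γ.Adj v w) :
    f (PresentedGroup.of v) + (ρ (PresentedGroup.of v) : ℂ) * f (PresentedGroup.of w)
      = f (PresentedGroup.of w) + (ρ (PresentedGroup.of w) : ℂ) * f (PresentedGroup.of v) := by
  have hf2 := hf
  rw [groupCohomology.mem_cocycles₁_iff] at hf2
  have h1 := hf2 (PresentedGroup.of v) (PresentedGroup.of w)
  have h2 := hf2 (PresentedGroup.of w) (PresentedGroup.of v)
  rw [raag_comm h] at h1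
  have h3 := h1.symm.trans h2
  have h4 : (ρ (PresentedGroup.of v) : ℂ) * f (PresentedGroup.of w) + f (PresentedGroup.of v)
      = (ρ (PresentedGroup.of w) : ℂ) * f (PresentedGroup.of v) + f (PresentedGroup.of w) := h3
  linear_combination h4

lemma unit_coe_ne_one {u : ℂˣ} (h : u ≠ 1) : (u : ℂ) ≠ 1 := by
  intro hc
  exact h (Units.ext (by simpa using hc))


set_option maxHeartbeats 800000 in
/-- If the support misses `W₂` (and everything outside `W₁ ∪ W₂`), the indicator of `W₂`
gives a non-coboundary cocycle. -/
lemma indicator_noncob {V : Type} {Γ : SimpleGraph V} (ρ : RAAG Γ →* ℂˣ)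
    (W₁ W₂ : Set V)
    (hnoadj : ∀ v ∈ W₁, ∀ w ∈ W₂, ¬ Γ.Adj v w)
    (hout : ∀ v, v ∉ W₁ ∪ W₂ → (ρ (PresentedGroup.of v) : ℂ) = 1)
    (h2 : ∀ s ∈ W₂, (ρ (PresentedGroup.of s) : ℂ) = 1)
    (hne2 : W₂.Nonempty) :
    ∃ F : groupCohomology.cocycles₁ (Rep.of (charRep ρ)),
      ⇑F ∉ groupCohomology.coboundaries₁ (Rep.of (charRep ρ)) := by
  classical
  set x : V → ℂ := fun v => if v ∈ W₂ then 1 else 0 with hxdef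
  have hW1 : ∀ v ∈ W₂, ∀ w, Γ.Adj v w → (ρ (PresentedGroup.of w) : ℂ) = 1 := by
    intro v hv w hadj
    by_cases hwW1 : w ∈ W₁
    · exact absurd hadj.symm (hnoadj w hwW1 v hv)
    · by_cases hwW2 : w ∈ W₂
      · exact h2 w hwW2
      · exact hout w (fun hc => hc.elim hwW1 hwW2)
  have hcoc : ∀ v w : V, Γ.Adj v w →
      x v + (ρ (PresentedGroup.of v) : ℂ) * x w
        = x w + (ρ (PresentedGroup.of w) : ℂ) * x v := by
    intro v w hadj
    by_cases hv : v ∈ W₂ <;> by_cases hw : w ∈ W₂ <;>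
      simp only [hxdef, if_pos, if_neg, hv, hw, if_true, if_false]
    · rw [h2 v hv, h2 w hw]
    · rw [hW1 v hv w hadj]
      ring
    · rw [hW1 w hw v hadj.symm]
      ring
    · ring
  obtain ⟨f, hfmem, hfgen⟩ := exists_cocycle ρ x hcoc
  refine ⟨⟨f, hfmem⟩, ?_⟩
  rw [mem_coboundaries₁_iff']
  rintro ⟨a, hab⟩
  obtain ⟨w2, hw2⟩ := hne2
  obtain ⟨aC, haC⟩ : ∃ y : ℂ, a = y := ⟨a, rfl⟩
  have e : (ρ (PresentedGroup.of w2) : ℂ) * aC - aC = x w2 := by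
    have h := hab (PresentedGroup.of w2)
    rw [haC] at h
    have hh : (ρ (PresentedGroup.of w2) : ℂ) * aC - aC
        = f (PresentedGroup.of w2) := h
    rw [hfgen w2] at hh
    exact hh
  rw [hxdef] at e
  simp only [if_pos hw2] at e
  rw [h2 w2 hw2] at e
  simp at e

end Aux

open groupCohomology in
set_option maxHeartbeats 800000 in
theorem stmt_8 {V : Type} [Fintype V] (Γ : SimpleGraph V)
    (ρ : RAAG Γ →* ℂˣ) (hρ : ρ ≠ 1) :
    Nontrivial (groupCohomology (Rep.of (charRep ρ)) 1) ↔
      ∃ W : Set V, {v : V | ρ (PresentedGroup.of v) ≠ 1} ⊆ W ∧ IsDisconnectedIn Γ W := by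
  classical
  set S : Set V := {v : V | ρ (PresentedGroup.of v) ≠ 1} with hS
  set r : V → ℂ := fun v => (ρ (PresentedGroup.of v) : ℂ) with hr
  have hSne : S.Nonempty := by
    by_contra hc
    rw [Set.not_nonempty_iff_eq_empty] at hc
    apply hρ
    apply PresentedGroup.ext
    intro v
    have hv : v ∉ S := hc ▸ Set.notMem_empty v
    have h1 : ρ (PresentedGroup.of v) = 1 := not_not.mp hv
    simpa using h1
  have hrS : ∀ v ∈ S, r v ≠ 1 := fun v hv => unit_coe_ne_one hv
  have hrnS : ∀ v, v ∉ S → r v = 1 := by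
    intro v hv
    have : ρ (PresentedGroup.of v) = 1 := not_not.mp hv
    simp [hr, this]
  rw [nontrivial_H1_iff]
  constructor
  · rintro ⟨f, hf⟩
    set x : V → ℂ := fun v => f (PresentedGroup.of v) with hx
    have hedge : ∀ v w : V, Γ.Adj v w → x v + r v * x w = x w + r w * x v :=
      fun v w h => cocycle_edge ρ f.2 h
    by_cases hA : ∃ w, w ∉ S ∧ x w ≠ 0
    · obtain ⟨w0, hw0S, hw0x⟩ := hA
      refine ⟨S ∪ {w | w ∉ S ∧ x w ≠ 0}, Set.subset_union_left,
        S, {w | w ∉ S ∧ x w ≠ 0}, hSne, ⟨w0, hw0S, hw0x⟩, ?_, rfl, ?_⟩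
      · exact Set.disjoint_left.2 fun v hv ⟨hv', _⟩ => hv' hv
      · intro v hv w hw hadj
        have he := hedge v w hadj
        rw [hrnS w hw.1] at he
        have : (r v - 1) * x w = 0 := by linear_combination he
        rcases mul_eq_zero.1 this with h | h
        · exact hrS v hv (by linear_combination h)
        · exact hw.2 h
    · push_neg at hA
      by_cases hB : ∃ v0 ∈ S, ∃ v1 ∈ S, x v0 * (1 - r v1) ≠ x v1 * (1 - r v0)
      · obtain ⟨v0, hv0, v1, hv1, hne⟩ := hB
        refine ⟨S, subset_rfl,
          {v | v ∈ S ∧ x v * (1 - r v0) = x v0 * (1 - r v)},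
          {v | v ∈ S ∧ x v * (1 - r v0) ≠ x v0 * (1 - r v)},
          ⟨v0, hv0, by ring⟩, ⟨v1, hv1, fun hc => hne (by linear_combination -hc)⟩, ?_, ?_, ?_⟩
        · exact Set.disjoint_left.2 fun v hv hv' => hv'.2 hv.2
        · ext v
          constructor
          · rintro (h | h) <;> exact h.1
          · intro hv
            by_cases hc : x v * (1 - r v0) = x v0 * (1 - r v)
            · exact Or.inl ⟨hv, hc⟩
            · exact Or.inr ⟨hv, hc⟩
        · rintro v ⟨hvS, hveq⟩ w ⟨hwS, hwne⟩ hadj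
          apply hwne
          have he := hedge v w hadj
          have hrv : (1 : ℂ) - r v ≠ 0 := fun hc => hrS v hvS (by linear_combination -hc)
          apply mul_left_cancel₀ hrv
          linear_combination (-(1 - r v0)) * he + (1 - r w) * hveq
      · push_neg at hB
        exfalso
        apply hf
        obtain ⟨v0, hv0⟩ := hSne
        set a : ℂ := -(x v0 / (1 - r v0)) with ha
        have hrv0 : (1 : ℂ) - r v0 ≠ 0 := fun hc => hrS v0 hv0 (by linear_combination -hc)
        -- the coboundary d g = ρ g a - a is a cocycle
        have hd : (fun g : RAAG Γ => (ρ g : ℂ) * a - a)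
            ∈ groupCohomology.cocycles₁ (Rep.of (charRep ρ)) := by
          rw [groupCohomology.mem_cocycles₁_iff]
          intro g h
          show (ρ (g * h) : ℂ) * a - a
            = (ρ g : ℂ) * ((ρ h : ℂ) * a - a) + ((ρ g : ℂ) * a - a)
          rw [map_mul]
          push_cast
          ring
        set F : groupCohomology.cocycles₁ (Rep.of (charRep ρ)) := ⟨_, hd⟩ with hF
        have hgen : ∀ v : V, (f - F) (PresentedGroup.of v) = 0 := by
          intro v
          have hFv : (f - F) (PresentedGroup.of v) = x v - (r v * a - a) := rfl
          rw [hFv]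
          by_cases hvS : v ∈ S
          · have hcross := hB v hvS v0 hv0
            rw [ha]
            field_simp
            linear_combination hcross
          · rw [hrnS v hvS, hA v hvS]
            ring
        have hall : ∀ g, f g = F g := by
          intro g
          have := cocycle_vanish ρ (f - F) hgen g
          have h2 : (f : RAAG Γ → ℂ) g - F g = 0 := this
          exact sub_eq_zero.mp h2
        rw [mem_coboundaries₁_iff']
        exact ⟨a, fun g => (hall g).symm⟩
  · rintro ⟨W, hSW, W₁, W₂, hne1, hne2, hdisj, hunion, hnoadj⟩
    have hWn : ∀ v, v ∉ W → r v = 1 := fun v hv => hrnS v (fun hvS => hv (hSW hvS))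
    by_cases h2 : ∃ s ∈ W₂, s ∈ S
    · by_cases h1 : ∃ s ∈ W₁, s ∈ S
      · -- support meets both parts: use x = (1 - r v) on W₁, 0 elsewhere
        obtain ⟨s1, hs1W, hs1S⟩ := h1
        obtain ⟨s2, hs2W, hs2S⟩ := h2
        set x : V → ℂ := fun v => if v ∈ W₁ then 1 - r v else 0 with hxdef
        have hcoc : ∀ v w : V, Γ.Adj v w → x v + r v * x w = x w + r w * x v := by
          intro v w hadj
          by_cases hv : v ∈ W₁ <;> by_cases hw : w ∈ W₁ <;>
            simp only [hxdef, hv, hw, if_pos, if_neg, if_true, if_false]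
          · ring
          · have hwW : w ∉ W := by
              intro hwW
              rcases (hunion ▸ hwW : w ∈ W₁ ∪ W₂) with h | h
              · exact hw h
              · exact hnoadj v hv w h hadj
            rw [hrnS w (fun hwS => hwW (hSW hwS))]
            ring
          · have hvW : v ∉ W := by
              intro hvW
              rcases (hunion ▸ hvW : v ∈ W₁ ∪ W₂) with h | h
              · exact hv h
              · exact hnoadj w hw v h hadj.symm
            rw [hrnS v (fun hvS => hvW (hSW hvS))]
            ring
          · ring
        obtain ⟨f, hfmem, hfgen⟩ := exists_cocycle ρ x hcoc
        refine ⟨⟨f, hfmem⟩, ?_⟩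
        rw [mem_coboundaries₁_iff']
        rintro ⟨a, hab⟩
        obtain ⟨aC, haC⟩ : ∃ y : ℂ, a = y := ⟨a, rfl⟩
        have e1 : r s1 * aC - aC = x s1 := by
          have h := hab (PresentedGroup.of s1)
          rw [haC] at h
          have hh : r s1 * aC - aC = f (PresentedGroup.of s1) := h
          rw [hfgen s1] at hh
          exact hh
        have e2 : r s2 * aC - aC = x s2 := by
          have h := hab (PresentedGroup.of s2)
          rw [haC] at h
          have hh : r s2 * aC - aC = f (PresentedGroup.of s2) := h
          rw [hfgen s2] at hh
          exact hh
        rw [hxdef] at e1 e2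
        simp only [if_pos hs1W] at e1
        have hs2W1 : s2 ∉ W₁ := fun hc => (Set.disjoint_left.1 hdisj hc) hs2W
        simp only [if_neg hs2W1] at e2
        -- from e1 : (r s1) a - a = 1 - r s1 with r s1 ≠ 1, get a = -1
        have ha1 : (r s1 - 1) * (aC + 1) = 0 := by linear_combination e1
        have ha2 : (r s2 - 1) * aC = 0 := by linear_combination e2
        have h1' : r s1 - 1 ≠ 0 := fun hc => hrS s1 hs1S (by linear_combination hc)
        have h2' : r s2 - 1 ≠ 0 := fun hc => hrS s2 hs2S (by linear_combination hc)
        have hA1 : aC = -1 := by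
          rcases mul_eq_zero.1 ha1 with h | h
          · exact absurd h h1'
          · exact eq_neg_of_add_eq_zero_left h
        have hA2 : aC = 0 := by
          rcases mul_eq_zero.1 ha2 with h | h
          · exact absurd h h2'
          · exact h
        rw [hA2] at hA1
        norm_num at hA1
      · -- support misses W₁: use indicator of W₁
        push_neg at h1
        exact indicator_noncob ρ W₂ W₁
          (fun v hv w hw hadj => hnoadj w hw v hv hadj.symm)
          (fun v hv => hWn v (fun hc => hv ((Set.union_comm W₂ W₁ ▸ hunion) ▸ hc)))
          (fun s hs => hrnS s (h1 s hs)) hne1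
    · push_neg at h2
      exact indicator_noncob ρ W₁ W₂ hnoadj
        (fun v hv => hWn v (fun hc => hv (hunion ▸ hc)))
        (fun s hs => hrnS s (h2 s hs)) hne2
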